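/- Atom-renaming with a one-directional bridge preserves answer sets: let P be a ground normal program, P_s ⊆ P a subprogram, a an atom, and a' a fresh atom. Define P' = P_s ∪ { a ← a' } ∪ { r with a replaced by a' in its head | r ∈ P \ P_s }. Then the answer sets of P' and of P coincide modulo the atom a' (i.e., projecting answer sets of P' to the original atoms gives exactly the answer sets of P, provided a' does not occur in any rule body of P). -/

import Mathlib

structure Rule (Atom : Type) where
  head : Atom
  pbody : Set Atom
  nbody : Set Atom

def satRule {Atom : Type} (I : Set Atom) (r : Rule Atom) : Prop :=
  r.pbody ⊆ I ∧ r.nbody ∩ I = ∅ → r.head ∈ I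

def isModel {Atom : Type} (I : Set Atom) (P : Set (Rule Atom)) : Prop :=
  ∀ r ∈ P, satRule I r

def reduct {Atom : Type} (P : Set (Rule Atom)) (I : Set Atom) : Set (Rule Atom) :=
  {r' | ∃ r ∈ P, r.nbody ∩ I = ∅ ∧ r' = Rule.mk r.head r.pbody ∅}

def isAnswerSet {Atom : Type} (P : Set (Rule Atom)) (I : Set Atom) : Prop :=
  isModel I (reduct P I) ∧ ∀ J, isModel J (reduct P I) → I ⊆ J

def facts {Atom : Type} (F : Set Atom) : Set (Rule Atom) :=
  {r | ∃ a ∈ F, r = Rule.mk a ∅ ∅}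

theorem stmt18 {Atom : Type} [DecidableEq Atom] (P Ps : Set (Rule Atom))
    (a a' : Atom) (hPs : Ps ⊆ P)
    (hfresh : ∀ r ∈ P, r.head ≠ a' ∧ a' ∉ r.pbody ∧ a' ∉ r.nbody) (hne : a' ≠ a) :
    ∀ I, isAnswerSet P I ↔
      ∃ I', isAnswerSet
          (Ps ∪ {Rule.mk a {a'} ∅}
             ∪ {r' | ∃ r ∈ P \ Ps,
                  r' = Rule.mk (if r.head = a then a' else r.head) r.pbody r.nbody}) I'
        ∧ I = I' \ {a'} := by
  classical
  intro I
  set Q : Set (Rule Atom) :=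
      Ps ∪ {Rule.mk a {a'} ∅}
        ∪ {r' | ∃ r ∈ P \ Ps,
             r' = Rule.mk (if r.head = a then a' else r.head) r.pbody r.nbody} with hQdef
  have hQmem : ∀ r : Rule Atom, r ∈ Q ↔ r ∈ Ps ∨ r = Rule.mk a {a'} ∅ ∨
      ∃ r₀, r₀ ∈ P ∧ r₀ ∉ Ps ∧
        r = Rule.mk (if r₀.head = a then a' else r₀.head) r₀.pbody r₀.nbody := by
    intro r
    simp only [hQdef, Set.mem_union, Set.mem_singleton_iff, Set.mem_setOf_eq,
      Set.mem_diff, or_assoc]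
    tauto
  -- intersection helper
  have hinter : ∀ (s t : Set Atom), a' ∉ s → s ∩ t = s ∩ (t \ {a'}) := by
    intro s t h
    ext x
    simp only [Set.mem_inter_iff, Set.mem_diff, Set.mem_singleton_iff]
    constructor
    · rintro ⟨hs, ht⟩; exact ⟨hs, ht, fun e => h (e ▸ hs)⟩
    · rintro ⟨hs, ht, -⟩; exact ⟨hs, ht⟩
  have hnbQ : ∀ r ∈ Q, a' ∉ r.nbody := by
    intro r hr
    rcases (hQmem r).1 hr with h | h | ⟨r₀, h₀, -, rfl⟩
    · exact (hfresh r (hPs h)).2.2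
    · subst h; simp
    · exact (hfresh r₀ h₀).2.2
  have hred : ∀ I₀ I₁ : Set Atom, I₀ \ {a'} = I₁ \ {a'} → reduct Q I₀ = reduct Q I₁ := by
    intro I₀ I₁ h
    have key : ∀ r ∈ Q, r.nbody ∩ I₀ = r.nbody ∩ I₁ := by
      intro r hr
      rw [hinter _ _ (hnbQ r hr), hinter r.nbody I₁ (hnbQ r hr), h]
    ext r'
    constructor
    · rintro ⟨r, hrQ, hnb, rfl⟩
      exact ⟨r, hrQ, by rw [← key r hrQ]; exact hnb, rfl⟩
    · rintro ⟨r, hrQ, hnb, rfl⟩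
      exact ⟨r, hrQ, by rw [key r hrQ]; exact hnb, rfl⟩
  constructor
  · -- forward
    rintro ⟨hmod, hleast⟩
    have ha'I : a' ∉ I := by
      intro h
      have hsub : I ⊆ I \ {a'} := by
        apply hleast
        rintro r' ⟨r, hrP, hnb, rfl⟩ ⟨hp, -⟩
        have hpI : r.pbody ⊆ I := fun x hx => (hp hx).1
        have hd : r.head ∈ I := hmod (Rule.mk r.head r.pbody ∅) ⟨r, hrP, hnb, rfl⟩ ⟨hpI, Set.empty_inter I⟩
        exact ⟨hd, (hfresh r hrP).1⟩
      exact (hsub h).2 rfl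
    set C : Prop := ∃ r, r ∈ P ∧ r ∉ Ps ∧ r.head = a ∧ r.nbody ∩ I = ∅ ∧ r.pbody ⊆ I
      with hCdef
    set M : Set Atom := I ∪ {x | x = a' ∧ C} with hMdef
    have hIM : I ⊆ M := Set.subset_union_left
    have hMdiff : M \ {a'} = I := by
      ext x
      simp only [hMdef, Set.mem_diff, Set.mem_union, Set.mem_setOf_eq,
        Set.mem_singleton_iff]
      constructor
      · rintro ⟨h | ⟨rfl, -⟩, hx⟩
        · exact h
        · exact absurd rfl hx
      · intro h; exact ⟨Or.inl h, fun e => ha'I (e ▸ h)⟩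
    have hredM : reduct Q M = reduct Q I :=
      hred M I (by rw [hMdiff, Set.diff_singleton_eq_self ha'I])
    -- pbody of P-rules avoids a', so pbody ⊆ M → pbody ⊆ I
    have hpbM : ∀ r ∈ P, r.pbody ⊆ M → r.pbody ⊆ I := by
      intro r hr hp x hx
      rcases hp hx with h | ⟨rfl, -⟩
      · exact h
      · exact absurd hx (hfresh r hr).2.1
    refine ⟨M, ⟨?_, ?_⟩, hMdiff.symm⟩
    · -- M models reduct Q M
      rw [hredM]
      rintro r' ⟨r, hrQ, hnb, rfl⟩ ⟨hp, -⟩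
      rcases (hQmem r).1 hrQ with hrPs | heq | ⟨r₀, hr₀P, hr₀nPs, rfl⟩
      · exact hIM (hmod _ ⟨r, hPs hrPs, hnb, rfl⟩ ⟨hpbM r (hPs hrPs) hp, Set.empty_inter I⟩)
      · subst heq
        have ha'M : a' ∈ M := hp rfl
        have hC : C := by
          rcases ha'M with h | ⟨-, h⟩
          · exact absurd h ha'I
          · exact h
        obtain ⟨r₀, hr₀P, -, hhd, hnb₀, hpb₀⟩ := hC
        have : r₀.head ∈ I := hmod (Rule.mk r₀.head r₀.pbody ∅) ⟨r₀, hr₀P, hnb₀, rfl⟩ ⟨hpb₀, Set.empty_inter I⟩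
        exact hIM (hhd ▸ this)
      · simp only at hp hnb ⊢
        have hpI : r₀.pbody ⊆ I := hpbM r₀ hr₀P hp
        by_cases hha : r₀.head = a
        · simp only [hha, if_pos]
          exact Or.inr ⟨rfl, ⟨r₀, hr₀P, hr₀nPs, hha, hnb, hpI⟩⟩
        · simp only [hha, if_neg, ite_false]
          exact hIM (hmod (Rule.mk r₀.head r₀.pbody ∅) ⟨r₀, hr₀P, hnb, rfl⟩ ⟨hpI, Set.empty_inter I⟩)
    · -- least
      intro J hJ
      rw [hredM] at hJ
      set K : Set Atom := (J \ {a'}) ∪ {x | x = a ∧ a' ∈ J} with hKdef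
      have hfactQ : Rule.mk a {a'} ∅ ∈ Q := (hQmem _).2 (Or.inr (Or.inl rfl))
      have hKJ : K ⊆ J := by
        rintro x (⟨hx, -⟩ | ⟨hxa, ha'J⟩)
        · exact hx
        · rw [hxa]
          exact hJ _ ⟨Rule.mk a {a'} ∅, hfactQ, Set.empty_inter I, rfl⟩
            ⟨Set.singleton_subset_iff.2 ha'J, Set.empty_inter J⟩
      have hKmod : isModel K (reduct P I) := by
        rintro r' ⟨r, hrP, hnb, rfl⟩ ⟨hp, -⟩
        have hpJ : r.pbody ⊆ J := fun x hx => hKJ (hp hx)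
        by_cases hrPs : r ∈ Ps
        · have : r.head ∈ J := hJ (Rule.mk r.head r.pbody ∅) ⟨r, (hQmem r).2 (Or.inl hrPs), hnb, rfl⟩
            ⟨hpJ, Set.empty_inter J⟩
          exact Or.inl ⟨this, (hfresh r hrP).1⟩
        · have hrenQ : Rule.mk (if r.head = a then a' else r.head) r.pbody r.nbody ∈ Q :=
            (hQmem _).2 (Or.inr (Or.inr ⟨r, hrP, hrPs, rfl⟩))
          have : (if r.head = a then a' else r.head) ∈ J :=
            hJ _ ⟨_, hrenQ, hnb, rfl⟩ ⟨hpJ, Set.empty_inter J⟩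
          by_cases hha : r.head = a
          · rw [if_pos hha] at this
            exact Or.inr ⟨hha, this⟩
          · rw [if_neg hha] at this
            exact Or.inl ⟨this, (hfresh r hrP).1⟩
      have hIK : I ⊆ K := hleast K hKmod
      rintro x (hx | ⟨hxa, hC⟩)
      · exact hKJ (hIK hx)
      · rw [hxa]
        obtain ⟨r₀, hr₀P, hr₀nPs, hhd, hnb₀, hpb₀⟩ := hC
        have hrenQ : Rule.mk (if r₀.head = a then a' else r₀.head) r₀.pbody r₀.nbody ∈ Q :=
          (hQmem _).2 (Or.inr (Or.inr ⟨r₀, hr₀P, hr₀nPs, rfl⟩))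
        have hpJ : r₀.pbody ⊆ J := fun x hx => hKJ (hIK (hpb₀ hx))
        have : (if r₀.head = a then a' else r₀.head) ∈ J :=
          hJ _ ⟨_, hrenQ, hnb₀, rfl⟩ ⟨hpJ, Set.empty_inter J⟩
        rwa [if_pos hhd] at this
  · -- backward
    rintro ⟨I', ⟨hmod', hleast'⟩, rfl⟩
    have hdd : (I' \ {a'}) \ {a'} = I' \ {a'} :=
      Set.diff_singleton_eq_self (by simp)
    have hredI : reduct Q I' = reduct Q (I' \ {a'}) := hred _ _ hdd.symm
    have hnbeq : ∀ r ∈ P, r.nbody ∩ I' = r.nbody ∩ (I' \ {a'}) := fun r hr =>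
      hinter _ _ (hfresh r hr).2.2
    have hpbeq : ∀ r ∈ P, r.pbody ⊆ I' \ {a'} → r.pbody ⊆ I' := by
      intro r hr hp x hx; exact (hp hx).1
    -- the model part
    have hmodP : isModel (I' \ {a'}) (reduct P (I' \ {a'})) := by
      rintro r' ⟨r, hrP, hnb, rfl⟩ ⟨hp, -⟩
      have hnb' : r.nbody ∩ I' = ∅ := by rw [hnbeq r hrP]; exact hnb
      have hpI' : r.pbody ⊆ I' := hpbeq r hrP hp
      by_cases hrPs : r ∈ Ps
      · have : r.head ∈ I' := hmod' (Rule.mk r.head r.pbody ∅) ⟨r, (hQmem r).2 (Or.inl hrPs), hnb', rfl⟩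
          ⟨hpI', Set.empty_inter I'⟩
        exact ⟨this, (hfresh r hrP).1⟩
      · have hrenQ : Rule.mk (if r.head = a then a' else r.head) r.pbody r.nbody ∈ Q :=
          (hQmem _).2 (Or.inr (Or.inr ⟨r, hrP, hrPs, rfl⟩))
        have hh : (if r.head = a then a' else r.head) ∈ I' :=
          hmod' _ ⟨_, hrenQ, hnb', rfl⟩ ⟨hpI', Set.empty_inter I'⟩
        by_cases hha : r.head = a
        · rw [if_pos hha] at hh
          have hfactQ : Rule.mk a {a'} ∅ ∈ Q := (hQmem _).2 (Or.inr (Or.inl rfl))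
          have haI' : a ∈ I' := hmod' _ ⟨_, hfactQ, Set.empty_inter I', rfl⟩
            ⟨Set.singleton_subset_iff.2 hh, Set.empty_inter I'⟩
          exact ⟨hha ▸ haI', fun e => hne ((hha ▸ e : a = a')).symm⟩
        · rw [if_neg hha] at hh
          exact ⟨hh, (hfresh r hrP).1⟩
    refine ⟨hmodP, ?_⟩
    intro J hJ
    set J₁ : Set Atom := J ∩ (I' \ {a'}) with hJ₁def
    have hJ₁mod : isModel J₁ (reduct P (I' \ {a'})) := by
      rintro r' ⟨r, hrP, hnb, rfl⟩ ⟨hp, -⟩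
      have hpJ : r.pbody ⊆ J := fun x hx => (hp hx).1
      have hpI : r.pbody ⊆ I' \ {a'} := fun x hx => (hp hx).2
      exact ⟨hJ _ ⟨r, hrP, hnb, rfl⟩ ⟨hpJ, Set.empty_inter J⟩,
        hmodP _ ⟨r, hrP, hnb, rfl⟩ ⟨hpI, Set.empty_inter _⟩⟩
    set C' : Prop := ∃ r, r ∈ P ∧ r ∉ Ps ∧ r.head = a ∧ r.nbody ∩ I' = ∅ ∧ r.pbody ⊆ J₁
      with hC'def
    set J' : Set Atom := J₁ ∪ {x | x = a' ∧ C'} with hJ'def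
    have hpbJ' : ∀ r ∈ P, r.pbody ⊆ J' → r.pbody ⊆ J₁ := by
      intro r hr hp x hx
      rcases hp hx with h | ⟨rfl, -⟩
      · exact h
      · exact absurd hx (hfresh r hr).2.1
    have hJ'mod : isModel J' (reduct Q I') := by
      rintro r' ⟨r, hrQ, hnb, rfl⟩ ⟨hp, -⟩
      rcases (hQmem r).1 hrQ with hrPs | heq | ⟨r₀, hr₀P, hr₀nPs, rfl⟩
      · have hrP := hPs hrPs
        have hnbI : r.nbody ∩ (I' \ {a'}) = ∅ := by rw [← hnbeq r hrP]; exact hnb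
        exact Or.inl (hJ₁mod _ ⟨r, hrP, hnbI, rfl⟩ ⟨hpbJ' r hrP hp, Set.empty_inter _⟩)
      · subst heq
        simp only at hp ⊢
        have ha'J' : a' ∈ J' := hp rfl
        have hC' : C' := by
          rcases ha'J' with h | ⟨-, h⟩
          · exact absurd ((h : a' ∈ J ∩ (I' \ {a'})).2.2) (by simp)
          · exact h
        obtain ⟨r₀, hr₀P, -, hhd, hnb₀, hpb₀⟩ := hC'
        have hnbI : r₀.nbody ∩ (I' \ {a'}) = ∅ := by rw [← hnbeq r₀ hr₀P]; exact hnb₀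
        have : r₀.head ∈ J₁ := hJ₁mod (Rule.mk r₀.head r₀.pbody ∅) ⟨r₀, hr₀P, hnbI, rfl⟩ ⟨hpb₀, Set.empty_inter _⟩
        exact Or.inl (hhd ▸ this)
      · simp only at hp hnb ⊢
        have hpJ₁ : r₀.pbody ⊆ J₁ := hpbJ' r₀ hr₀P hp
        by_cases hha : r₀.head = a
        · simp only [hha, if_pos]
          exact Or.inr ⟨rfl, ⟨r₀, hr₀P, hr₀nPs, hha, hnb, hpJ₁⟩⟩
        · simp only [hha, ite_false]
          have hnbI : r₀.nbody ∩ (I' \ {a'}) = ∅ := by rw [← hnbeq r₀ hr₀P]; exact hnb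
          exact Or.inl (hJ₁mod (Rule.mk r₀.head r₀.pbody ∅) ⟨r₀, hr₀P, hnbI, rfl⟩ ⟨hpJ₁, Set.empty_inter _⟩)
    have hI'J' : I' ⊆ J' := hleast' J' hJ'mod
    rintro x ⟨hxI', hxne⟩
    rcases hI'J' hxI' with h | ⟨hxa, -⟩
    · exact (h : x ∈ J ∩ (I' \ {a'})).1
    · exact absurd hxa hxne
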